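/- Let m ≥ 1 and n ≥ 2 be such that √m·(log n)/√n ≤ 1. Then (n/(n + √(m·n)·log n))^{√(m·n)·(log n)/2} ≤ n^{-(m·log n)/4}. -/

import Mathlib

open Real

lemma half_le_log_one_add (x : ℝ) (hx0 : 0 ≤ x) (hx1 : x ≤ 1) :
    x / 2 ≤ Real.log (1 + x) := by
  have hpos : (0:ℝ) < 1 + x := by linarith
  rw [Real.le_log_iff_exp_le hpos]
  have h2 : 1 - x/2 ≤ Real.exp (-(x/2)) := by
    have := Real.add_one_le_exp (-(x/2)); linarith
  have key : Real.exp (x/2) * (1 - x/2) ≤ 1 := by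
    calc Real.exp (x/2) * (1 - x/2) ≤ Real.exp (x/2) * Real.exp (-(x/2)) :=
          mul_le_mul_of_nonneg_left h2 (Real.exp_pos _).le
      _ = 1 := by rw [← Real.exp_add]; simp
  nlinarith [Real.exp_pos (x/2), sq_nonneg x]

theorem stmt_7 (m n : ℝ) (hm : 1 ≤ m) (hn : 2 ≤ n)
    (h : Real.sqrt m * Real.log n / Real.sqrt n ≤ 1) :
    (n / (n + Real.sqrt (m * n) * Real.log n)) ^ (Real.sqrt (m * n) * Real.log n / 2)
      ≤ n ^ (-(m * Real.log n) / 4) := by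
  have hn0 : (0:ℝ) < n := by linarith
  have hlogn : 0 < Real.log n := Real.log_pos (by linarith)
  have hmn : (0:ℝ) < m * n := by nlinarith
  have hsq : 0 < Real.sqrt (m * n) := Real.sqrt_pos.mpr hmn
  set s := Real.sqrt (m * n) * Real.log n with hs
  have hs0 : 0 < s := mul_pos hsq hlogn
  have hns : 0 < n + s := by linarith
  have hbase : 0 < n / (n + s) := div_pos hn0 hns
  rw [← Real.log_le_log_iff (Real.rpow_pos_of_pos hbase _) (Real.rpow_pos_of_pos hn0 _),
    Real.log_rpow hbase, Real.log_rpow hn0]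
  have hsqn : Real.sqrt n * Real.sqrt n = n := Real.mul_self_sqrt hn0.le
  have hsqn0 : 0 < Real.sqrt n := Real.sqrt_pos.mpr hn0
  have hxval : s / n = Real.sqrt m * Real.log n / Real.sqrt n := by
    rw [hs, Real.sqrt_mul (by linarith : (0:ℝ) ≤ m)]
    rw [div_eq_div_iff hn0.ne' hsqn0.ne']
    calc Real.sqrt m * Real.sqrt n * Real.log n * Real.sqrt n
        = Real.sqrt m * Real.log n * (Real.sqrt n * Real.sqrt n) := by ring
      _ = Real.sqrt m * Real.log n * n := by rw [hsqn]
  have hx0 : 0 ≤ s / n := (div_pos hs0 hn0).le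
  have hx1 : s / n ≤ 1 := by rw [hxval]; exact h
  have hlog := half_le_log_one_add (s / n) hx0 hx1
  have hrw : n / (n + s) = (1 + s / n)⁻¹ := by
    rw [inv_eq_one_div, div_eq_div_iff hns.ne' (by positivity : (1 + s / n) ≠ 0)]
    field_simp
  rw [hrw, Real.log_inv]
  have hs2 : s ^ 2 = m * n * Real.log n ^ 2 := by
    rw [hs, mul_pow, Real.sq_sqrt hmn.le]
  have key : m * Real.log n ^ 2 / 4 ≤ s / 2 * Real.log (1 + s / n) := by
    have h1 : s / 2 * (s / n / 2) ≤ s / 2 * Real.log (1 + s / n) :=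
      mul_le_mul_of_nonneg_left hlog (by linarith)
    have h2 : s / 2 * (s / n / 2) = s ^ 2 / (4 * n) := by ring
    rw [h2, hs2] at h1
    have : m * n * Real.log n ^ 2 / (4 * n) = m * Real.log n ^ 2 / 4 := by
      field_simp
    linarith [this ▸ h1]
  nlinarith [key]
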